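/- arXiv:2402.07202 — 2 statements merged into one kernel-verified Lean document; each statement's English description precedes it below -/
import Mathlib

section
/- Let J and J̃ be two Jacobi matrices on the same finite connected graph G with n vertices, with positive edge weights {a_e}, {ã_e} respectively. Let ψ and ψ̃ be their positive normalized top eigenvectors, and set S = max over edges e=(v,w) of (a_e ψ_v ψ_w)/(ã_e ψ̃_v ψ̃_w) and I = min over vertices v of ψ_v²/ψ̃_v². Then for every k = 1,…,n, λ₁(J) - λ_k(J) ≤ (S/I)·(λ₁(J̃) - λ_k(J̃)), where λ₁ ≥ λ₂ ≥ … ≥ λ_n denote the eigenvalues in decreasing order. -/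
open Finset Matrix


private lemma auxKernel {α β : Type*} [Fintype α] [Fintype β] [DecidableEq α]
    (M : Matrix β α ℝ) (h : Fintype.card β < Fintype.card α) :
    ∃ c : α → ℝ, c ≠ 0 ∧ M.mulVec c = 0 := by
  by_contra hc
  push_neg at hc
  have hinj : Function.Injective M.mulVecLin := by
    rw [← LinearMap.ker_eq_bot, LinearMap.ker_eq_bot']
    intro c h0
    by_contra hne
    exact hc c hne (by simpa using h0)
  have := LinearMap.finrank_le_finrank_of_injective hinj
  simp only [Module.finrank_fintype_fun_eq_card] at this
  omega

private lemma auxEigenBasis {V : Type*} [Fintype V] [DecidableEq V]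
    {A : Matrix V V ℝ} (hA : A.IsHermitian) :
    ∃ u : V → (V → ℝ),
      (∀ i j, u i ⬝ᵥ u j = if i = j then 1 else 0) ∧
      (∀ i, A.mulVec (u i) = hA.eigenvalues i • u i) ∧
      (∀ f : V → ℝ, ∀ v, f v = ∑ i, (u i ⬝ᵥ f) * u i v) := by
  refine ⟨fun i => ⇑(hA.eigenvectorBasis i), ?_, fun i => hA.mulVec_eigenvectorBasis i, ?_⟩
  · intro i j
    have h1 : star (hA.eigenvectorUnitary : Matrix V V ℝ) * (hA.eigenvectorUnitary : Matrix V V ℝ)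
        = 1 := Matrix.mem_unitaryGroup_iff'.mp (hA.eigenvectorUnitary).2
    have h2 := congrFun (congrFun h1 i) j
    simp only [Matrix.mul_apply, Matrix.one_apply, Matrix.star_apply, star_trivial,
      Matrix.IsHermitian.eigenvectorUnitary_apply] at h2
    rw [dotProduct, ← h2]
  · intro f v
    have h1 : (hA.eigenvectorUnitary : Matrix V V ℝ) * star (hA.eigenvectorUnitary : Matrix V V ℝ)
        = 1 := Matrix.mem_unitaryGroup_iff.mp (hA.eigenvectorUnitary).2
    have h3 : ((hA.eigenvectorUnitary : Matrix V V ℝ) *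
        star (hA.eigenvectorUnitary : Matrix V V ℝ)).mulVec f v = f v := by
      rw [h1, Matrix.one_mulVec]
    rw [← h3]
    simp only [Matrix.mulVec, dotProduct, Matrix.mul_apply, Matrix.star_apply,
      star_trivial, Matrix.IsHermitian.eigenvectorUnitary_apply, Finset.sum_mul, Finset.mul_sum]
    rw [Finset.sum_comm]
    exact Finset.sum_congr rfl fun i _ => Finset.sum_congr rfl fun w _ => by ring

private lemma auxExpansion {V : Type*} [Fintype V]
    (M : Matrix V V ℝ) (u : V → V → ℝ) (lam : V → ℝ)
    (heig : ∀ i, M.mulVec (u i) = lam i • u i)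
    (hcomp : ∀ f : V → ℝ, ∀ v, f v = ∑ i, (u i ⬝ᵥ f) * u i v)
    (f : V → ℝ) :
    f ⬝ᵥ f = ∑ i, (u i ⬝ᵥ f)^2 ∧ f ⬝ᵥ M.mulVec f = ∑ i, lam i * (u i ⬝ᵥ f)^2 := by
  constructor
  · calc f ⬝ᵥ f = ∑ v, (∑ i, (u i ⬝ᵥ f) * u i v) * f v := by
          rw [dotProduct]
          exact Finset.sum_congr rfl fun v _ => by rw [← hcomp f v]
      _ = ∑ i, (u i ⬝ᵥ f) * ∑ v, u i v * f v := by
          simp only [Finset.sum_mul, Finset.mul_sum]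
          rw [Finset.sum_comm]
          exact Finset.sum_congr rfl fun i _ => Finset.sum_congr rfl fun v _ => by ring
      _ = ∑ i, (u i ⬝ᵥ f)^2 := Finset.sum_congr rfl fun i _ => by
          rw [← dotProduct]; ring
  · have hMf : ∀ w, M.mulVec f w = ∑ i, (u i ⬝ᵥ f) * (lam i * u i w) := by
      intro w
      have : M.mulVec f w = ∑ x, M w x * f x := rfl
      rw [this]
      calc ∑ x, M w x * f x = ∑ x, M w x * ∑ i, (u i ⬝ᵥ f) * u i x := by
            exact Finset.sum_congr rfl fun x _ => by rw [← hcomp f x]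
        _ = ∑ i, (u i ⬝ᵥ f) * ∑ x, M w x * u i x := by
            simp only [Finset.mul_sum]
            rw [Finset.sum_comm]
            exact Finset.sum_congr rfl fun i _ => Finset.sum_congr rfl fun x _ => by ring
        _ = ∑ i, (u i ⬝ᵥ f) * (lam i * u i w) := by
            refine Finset.sum_congr rfl fun i _ => ?_
            congr 1
            have := congrFun (heig i) w
            simpa [Matrix.mulVec, dotProduct] using this
    calc f ⬝ᵥ M.mulVec f = ∑ w, f w * ∑ i, (u i ⬝ᵥ f) * (lam i * u i w) := by
          rw [dotProduct]
          exact Finset.sum_congr rfl fun w _ => by rw [hMf w]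
      _ = ∑ i, (u i ⬝ᵥ f) * lam i * ∑ w, u i w * f w := by
          simp only [Finset.mul_sum, Finset.sum_mul]
          rw [Finset.sum_comm]
          exact Finset.sum_congr rfl fun i _ => Finset.sum_congr rfl fun w _ => by ring
      _ = ∑ i, lam i * (u i ⬝ᵥ f)^2 := Finset.sum_congr rfl fun i _ => by
          rw [← dotProduct]; ring

private lemma auxQuad {V : Type*} [Fintype V]
    (M : Matrix V V ℝ) (hM : M.IsHermitian) (φ : V → ℝ) (lam : ℝ)
    (hφ : M.mulVec φ = lam • φ) (g : V → ℝ) :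
    lam * ((fun v => φ v * g v) ⬝ᵥ (fun v => φ v * g v))
      - (fun v => φ v * g v) ⬝ᵥ M.mulVec (fun v => φ v * g v)
      = (1/2) * ∑ v, ∑ w, M v w * (φ v * φ w) * (g v - g w)^2 := by
  have hsym : ∀ v w, M w v = M v w := by
    intro v w
    have := congrFun (congrFun hM v) w
    simpa using this
  have hrow : ∀ v, ∑ w, M v w * φ w = lam * φ v := by
    intro v
    have := congrFun hφ v
    simpa [Matrix.mulVec, dotProduct] using this
  have hS1 : ∑ v, ∑ w, M v w * (φ v * φ w) * g v ^ 2
      = lam * ∑ v, (φ v * g v)^2 := by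
    calc ∑ v, ∑ w, M v w * (φ v * φ w) * g v ^ 2
        = ∑ v, (φ v * g v ^ 2) * ∑ w, M v w * φ w := by
          refine Finset.sum_congr rfl fun v _ => ?_
          rw [Finset.mul_sum]
          exact Finset.sum_congr rfl fun w _ => by ring
      _ = ∑ v, (φ v * g v ^ 2) * (lam * φ v) := by
          exact Finset.sum_congr rfl fun v _ => by rw [hrow v]
      _ = lam * ∑ v, (φ v * g v)^2 := by
          rw [Finset.mul_sum]
          exact Finset.sum_congr rfl fun v _ => by ring
  have hS3 : ∑ v, ∑ w, M v w * (φ v * φ w) * g w ^ 2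
      = lam * ∑ v, (φ v * g v)^2 := by
    rw [Finset.sum_comm]
    calc ∑ w, ∑ v, M v w * (φ v * φ w) * g w ^ 2
        = ∑ w, (φ w * g w ^ 2) * ∑ v, M w v * φ v := by
          refine Finset.sum_congr rfl fun w _ => ?_
          rw [Finset.mul_sum]
          refine Finset.sum_congr rfl fun v _ => ?_
          rw [hsym w v]
          ring
      _ = ∑ w, (φ w * g w ^ 2) * (lam * φ w) := by
          exact Finset.sum_congr rfl fun w _ => by rw [hrow w]
      _ = lam * ∑ v, (φ v * g v)^2 := by
          rw [Finset.mul_sum]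
          exact Finset.sum_congr rfl fun v _ => by ring
  have hS2 : (fun v => φ v * g v) ⬝ᵥ M.mulVec (fun v => φ v * g v)
      = ∑ v, ∑ w, M v w * (φ v * φ w) * (g v * g w) := by
    simp only [dotProduct, Matrix.mulVec, Finset.mul_sum]
    exact Finset.sum_congr rfl fun v _ => Finset.sum_congr rfl fun w _ => by ring
  have hN : (fun v => φ v * g v) ⬝ᵥ (fun v => φ v * g v) = ∑ v, (φ v * g v)^2 := by
    simp only [dotProduct]
    exact Finset.sum_congr rfl fun v _ => by ring
  have hkey : ∀ v w, M v w * (φ v * φ w) * (g v - g w)^2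
      = M v w * (φ v * φ w) * g v ^ 2 - 2 * (M v w * (φ v * φ w) * (g v * g w))
        + M v w * (φ v * φ w) * g w ^ 2 := by
    intro v w; ring
  have hsplit : ∑ v, ∑ w, M v w * (φ v * φ w) * (g v - g w)^2
      = (∑ v, ∑ w, M v w * (φ v * φ w) * g v ^ 2)
        - 2 * (∑ v, ∑ w, M v w * (φ v * φ w) * (g v * g w))
        + (∑ v, ∑ w, M v w * (φ v * φ w) * g w ^ 2) := by
    simp only [hkey, Finset.sum_add_distrib, Finset.sum_sub_distrib, ← Finset.mul_sum]
  rw [hS2, hN, hsplit, hS1, hS3]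
  ring

/-- Comparison of eigenvalue gaps for two Jacobi matrices on the same finite
connected (multi)graph, via their ground states. Eigenvalues `μ`, `μ'` are
listed in decreasing order. -/
theorem stmt5 (V E : Type*) [Fintype V] [Fintype E] [DecidableEq V]
    [Nonempty V] [Nonempty E]
    (ends : E → V × V) (a a' : E → ℝ) (ha : ∀ e, 0 < a e) (ha' : ∀ e, 0 < a' e)
    (b b' : V → ℝ)
    (hconn : (SimpleGraph.fromRel
      (fun v w => ∃ e, ends e = (v, w) ∨ ends e = (w, v))).Connected)
    (J J' : Matrix V V ℝ)
    (hJ : ∀ v w, J v w =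
      if v = w then
        b v + 2 * ∑ e ∈ univ.filter (fun e => ends e = (v, v)), a e
      else
        ∑ e ∈ univ.filter (fun e => ends e = (v, w) ∨ ends e = (w, v)), a e)
    (hJ' : ∀ v w, J' v w =
      if v = w then
        b' v + 2 * ∑ e ∈ univ.filter (fun e => ends e = (v, v)), a' e
      else
        ∑ e ∈ univ.filter (fun e => ends e = (v, w) ∨ ends e = (w, v)), a' e)
    (hHerm : J.IsHermitian) (hHerm' : J'.IsHermitian)
    (hn : 0 < Fintype.card V)
    -- eigenvalues listed in decreasing order
    (μ μ' : Fin (Fintype.card V) → ℝ) (hμdec : Antitone μ) (hμ'dec : Antitone μ')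
    (hμ : ∃ σ : V ≃ Fin (Fintype.card V), μ ∘ σ = hHerm.eigenvalues)
    (hμ' : ∃ σ : V ≃ Fin (Fintype.card V), μ' ∘ σ = hHerm'.eigenvalues)
    -- normalized positive Perron eigenvectors
    (ψ ψ' : V → ℝ) (hψpos : ∀ v, 0 < ψ v) (hψ'pos : ∀ v, 0 < ψ' v)
    (hψnorm : ∑ v, ψ v ^ 2 = 1) (hψ'norm : ∑ v, ψ' v ^ 2 = 1)
    (hψ : J.mulVec ψ = μ ⟨0, hn⟩ • ψ) (hψ' : J'.mulVec ψ' = μ' ⟨0, hn⟩ • ψ')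
    (S I : ℝ)
    (hS : S = univ.sup' univ_nonempty fun e =>
      (a e * ψ (ends e).1 * ψ (ends e).2) /
        (a' e * ψ' (ends e).1 * ψ' (ends e).2))
    (hI : I = univ.inf' univ_nonempty fun v => ψ v ^ 2 / ψ' v ^ 2) :
    ∀ k : Fin (Fintype.card V),
      μ ⟨0, hn⟩ - μ k ≤ (S / I) * (μ' ⟨0, hn⟩ - μ' k) := by
  intro k
  classical
  obtain ⟨σ, hσ⟩ := hμ
  obtain ⟨σ', hσ'⟩ := hμ'
  obtain ⟨u, huorth, hueig0, hucomp⟩ := auxEigenBasis hHerm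
  obtain ⟨u', hu'orth, hu'eig0, hu'comp⟩ := auxEigenBasis hHerm'
  have hueig : ∀ i, J.mulVec (u i) = μ (σ i) • u i := by
    intro i
    rw [hueig0 i, show hHerm.eigenvalues i = μ (σ i) from (congrFun hσ i).symm]
  have hu'eig : ∀ i, J'.mulVec (u' i) = μ' (σ' i) • u' i := by
    intro i
    rw [hu'eig0 i, show hHerm'.eigenvalues i = μ' (σ' i) from (congrFun hσ' i).symm]
  -- positivity of S and I
  have hSpos : 0 < S := by
    obtain ⟨e₀⟩ := (inferInstance : Nonempty E)
    have h1 : (a e₀ * ψ (ends e₀).1 * ψ (ends e₀).2) /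
        (a' e₀ * ψ' (ends e₀).1 * ψ' (ends e₀).2) ≤ S := by
      rw [hS]
      exact Finset.le_sup' (fun e => (a e * ψ (ends e).1 * ψ (ends e).2) /
        (a' e * ψ' (ends e).1 * ψ' (ends e).2)) (mem_univ e₀)
    have h2 : 0 < (a e₀ * ψ (ends e₀).1 * ψ (ends e₀).2) /
        (a' e₀ * ψ' (ends e₀).1 * ψ' (ends e₀).2) :=
      div_pos (mul_pos (mul_pos (ha e₀) (hψpos _)) (hψpos _))
        (mul_pos (mul_pos (ha' e₀) (hψ'pos _)) (hψ'pos _))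
    linarith
  have hIpos : 0 < I := by
    rw [hI]
    exact (Finset.lt_inf'_iff univ_nonempty).mpr fun v _ =>
      div_pos (pow_pos (hψpos v) 2) (pow_pos (hψ'pos v) 2)
  have hIle : ∀ v, I * ψ' v ^ 2 ≤ ψ v ^ 2 := by
    intro v
    have h1 : I ≤ ψ v ^ 2 / ψ' v ^ 2 := by
      rw [hI]
      exact Finset.inf'_le (fun v => ψ v ^ 2 / ψ' v ^ 2) (mem_univ v)
    have h2 : (0:ℝ) < ψ' v ^ 2 := pow_pos (hψ'pos v) 2
    rw [le_div_iff₀ h2] at h1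
    linarith
  -- edge comparison
  have hF2 : ∀ v w, v ≠ w → J v w * (ψ v * ψ w) ≤ S * (J' v w * (ψ' v * ψ' w)) := by
    intro v w hvw
    rw [hJ v w, hJ' v w, if_neg hvw, if_neg hvw, Finset.sum_mul]
    have hrhs : S * ((∑ e ∈ univ.filter (fun e => ends e = (v, w) ∨ ends e = (w, v)), a' e)
        * (ψ' v * ψ' w))
        = ∑ e ∈ univ.filter (fun e => ends e = (v, w) ∨ ends e = (w, v)),
            S * (a' e * (ψ' v * ψ' w)) := by
      rw [Finset.sum_mul, Finset.mul_sum]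
    rw [hrhs]
    apply Finset.sum_le_sum
    intro e he
    simp only [mem_filter, mem_univ, true_and] at he
    have h2 : 0 < a' e * ψ' (ends e).1 * ψ' (ends e).2 :=
      mul_pos (mul_pos (ha' e) (hψ'pos _)) (hψ'pos _)
    have h1 : (a e * ψ (ends e).1 * ψ (ends e).2) /
        (a' e * ψ' (ends e).1 * ψ' (ends e).2) ≤ S := by
      rw [hS]
      exact Finset.le_sup' (fun e => (a e * ψ (ends e).1 * ψ (ends e).2) /
        (a' e * ψ' (ends e).1 * ψ' (ends e).2)) (mem_univ e)
    rw [div_le_iff₀ h2] at h1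
    rcases he with heq | heq <;> rw [heq] at h1 <;> simp only at h1 <;> linarith [h1]
  -- index sets
  set T : Finset V := univ.filter (fun i => (σ i : ℕ) < (k : ℕ)) with hTdef
  set T' : Finset V := univ.filter (fun i => (σ' i : ℕ) ≤ (k : ℕ)) with hT'def
  have hTcard : T.card = (k : ℕ) := by
    have h1 : T.card = (univ.filter fun j : Fin (Fintype.card V) => (j : ℕ) < (k : ℕ)).card := by
      apply Finset.card_bij (fun i _ => σ i)
      · intro i hi
        simp only [hTdef, mem_filter, mem_univ, true_and] at hi ⊢
        exact hi
      · intro i _ j _ hij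
        exact σ.injective hij
      · intro j hj
        refine ⟨σ.symm j, ?_, by simp⟩
        simp only [hTdef, mem_filter, mem_univ, true_and, Equiv.apply_symm_apply]
        simpa using hj
    rw [h1]
    have h2 : (univ.filter fun j : Fin (Fintype.card V) => (j : ℕ) < (k : ℕ)) = Finset.Iio k := by
      ext j
      rw [Finset.mem_filter, Finset.mem_Iio, Fin.lt_def]
      simp only [Finset.mem_univ, true_and]
    rw [h2, Fin.card_Iio]
  have hT'card : T'.card = (k : ℕ) + 1 := by
    have h1 : T'.card = (univ.filter fun j : Fin (Fintype.card V) => (j : ℕ) ≤ (k : ℕ)).card := by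
      apply Finset.card_bij (fun i _ => σ' i)
      · intro i hi
        simp only [hT'def, mem_filter, mem_univ, true_and] at hi ⊢
        exact hi
      · intro i _ j _ hij
        exact σ'.injective hij
      · intro j hj
        refine ⟨σ'.symm j, ?_, by simp⟩
        simp only [hT'def, mem_filter, mem_univ, true_and, Equiv.apply_symm_apply]
        simpa using hj
    rw [h1]
    have h2 : (univ.filter fun j : Fin (Fintype.card V) => (j : ℕ) ≤ (k : ℕ)) = Finset.Iic k := by
      ext j
      rw [Finset.mem_filter, Finset.mem_Iic, Fin.le_def]
      simp only [Finset.mem_univ, true_and]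
    rw [h2, Fin.card_Iic]
  -- the constraint matrix and its kernel
  set M : Matrix {i // i ∈ T} {i // i ∈ T'} ℝ :=
    fun jt it => u jt.1 ⬝ᵥ (fun v => ψ v / ψ' v * u' it.1 v) with hMdef
  have hcard : Fintype.card {i // i ∈ T} < Fintype.card {i // i ∈ T'} := by
    simp only [Fintype.card_coe, hTcard, hT'card]
    omega
  obtain ⟨c, hc0, hcker⟩ := auxKernel M hcard
  set h : V → ℝ := fun v => ∑ i : {i // i ∈ T'}, c i * u' i.1 v with hhdef
  set g : V → ℝ := fun v => h v / ψ' v with hgdef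
  set f : V → ℝ := fun v => ψ v * g v with hfdef
  have hgh : h = fun v => ψ' v * g v := by
    funext v
    rw [hgdef]
    exact (mul_div_cancel₀ (h v) (hψ'pos v).ne').symm
  -- coefficients of h in the u' basis
  have hd' : ∀ j, u' j ⬝ᵥ h = if hj : j ∈ T' then c ⟨j, hj⟩ else 0 := by
    intro j
    have h1 : u' j ⬝ᵥ h = ∑ i : {i // i ∈ T'}, c i * (u' j ⬝ᵥ u' i.1) := by
      rw [hhdef]
      simp only [dotProduct, Finset.mul_sum]
      rw [Finset.sum_comm]
      refine Finset.sum_congr rfl fun i _ => ?_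
      exact Finset.sum_congr rfl fun v _ => by ring
    rw [h1]
    by_cases hj : j ∈ T'
    · rw [dif_pos hj]
      rw [Finset.sum_eq_single (⟨j, hj⟩ : {i // i ∈ T'})]
      · rw [hu'orth]; simp
      · intro i _ hne
        rw [hu'orth]
        have hji : ¬ (j = i.1) := by
          intro hji
          exact hne (Subtype.ext hji.symm)
        simp [hji]
      · intro habs
        exact absurd (Finset.mem_univ _) habs
    · rw [dif_neg hj]
      apply Finset.sum_eq_zero
      intro i _
      rw [hu'orth]
      have hji : ¬ (j = i.1) := fun hji => hj (hji ▸ i.2)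
      simp [hji]
  have hhne : ∃ v, h v ≠ 0 := by
    by_contra hcon
    push_neg at hcon
    apply hc0
    funext i
    have h2 := hd' i.1
    rw [dif_pos i.2] at h2
    have h3 : u' i.1 ⬝ᵥ h = 0 := by
      simp only [dotProduct]
      exact Finset.sum_eq_zero fun v _ => by rw [hcon v, mul_zero]
    rw [h3] at h2
    exact h2.symm
  -- coefficients of f vanish on T
  have hd0 : ∀ j, j ∈ T → u j ⬝ᵥ f = 0 := by
    intro j hj
    have h1 : u j ⬝ᵥ f = ∑ i : {i // i ∈ T'}, M ⟨j, hj⟩ i * c i := by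
      rw [hfdef, hgdef, hhdef, hMdef]
      simp only [dotProduct, Finset.sum_div, Finset.mul_sum]
      rw [Finset.sum_comm]
      refine Finset.sum_congr rfl fun i _ => ?_
      rw [Finset.sum_mul]
      exact Finset.sum_congr rfl fun v _ => by ring
    rw [h1]
    have h2 := congrFun hcker ⟨j, hj⟩
    simpa [Matrix.mulVec, dotProduct] using h2
  clear_value T T' M h g f
  -- spectral expansions
  obtain ⟨hff, hfJf⟩ := auxExpansion J u (fun i => μ (σ i)) hueig hucomp f
  obtain ⟨hhh, hhJ'h⟩ := auxExpansion J' u' (fun i => μ' (σ' i)) hu'eig hu'comp h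
  have hmu0k : μ k ≤ μ ⟨0, hn⟩ := hμdec (by simp [Fin.le_def])
  have hmu'0k : μ' k ≤ μ' ⟨0, hn⟩ := hμ'dec (by simp [Fin.le_def])
  -- lower bound on Rayleigh quotient of f
  have hE1 : (μ ⟨0, hn⟩ - μ k) * (f ⬝ᵥ f) ≤ μ ⟨0, hn⟩ * (f ⬝ᵥ f) - f ⬝ᵥ J.mulVec f := by
    rw [hff, hfJf, Finset.mul_sum, Finset.mul_sum, ← Finset.sum_sub_distrib]
    apply Finset.sum_le_sum
    intro i _
    by_cases hi : i ∈ T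
    · rw [hd0 i hi]
      simp
    · have hki : k ≤ σ i := by
        rw [Fin.le_def]
        simp only [hTdef, mem_filter, mem_univ, true_and, not_lt] at hi
        exact hi
      have h3 : μ (σ i) ≤ μ k := hμdec hki
      have h4 := mul_le_mul_of_nonneg_right h3 (sq_nonneg (u i ⬝ᵥ f))
      linarith
  -- upper bound on Rayleigh quotient of h
  have hE2 : μ' ⟨0, hn⟩ * (h ⬝ᵥ h) - h ⬝ᵥ J'.mulVec h ≤ (μ' ⟨0, hn⟩ - μ' k) * (h ⬝ᵥ h) := by
    rw [hhh, hhJ'h, Finset.mul_sum, Finset.mul_sum, ← Finset.sum_sub_distrib]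
    apply Finset.sum_le_sum
    intro i _
    by_cases hi : i ∈ T'
    · have hki : σ' i ≤ k := by
        rw [Fin.le_def]
        simp only [hT'def, mem_filter, mem_univ, true_and] at hi
        exact hi
      have h3 : μ' k ≤ μ' (σ' i) := hμ'dec hki
      have h4 := mul_le_mul_of_nonneg_right h3 (sq_nonneg (u' i ⬝ᵥ h))
      linarith
    · have h3 : u' i ⬝ᵥ h = 0 := by rw [hd' i, dif_neg hi]
      rw [h3]
      simp
  -- ground state transform identities
  have hQ : μ ⟨0, hn⟩ * (f ⬝ᵥ f) - f ⬝ᵥ J.mulVec f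
      = (1/2) * ∑ v, ∑ w, J v w * (ψ v * ψ w) * (g v - g w)^2 := by
    have h5 := auxQuad J hHerm ψ (μ ⟨0, hn⟩) hψ g
    rw [← hfdef] at h5
    exact h5
  have hQ' : μ' ⟨0, hn⟩ * (h ⬝ᵥ h) - h ⬝ᵥ J'.mulVec h
      = (1/2) * ∑ v, ∑ w, J' v w * (ψ' v * ψ' w) * (g v - g w)^2 := by
    have h5 := auxQuad J' hHerm' ψ' (μ' ⟨0, hn⟩) hψ' g
    rw [← hgh] at h5
    exact h5
  -- comparison of the quadratic forms
  have hcompQ : ∑ v, ∑ w, J v w * (ψ v * ψ w) * (g v - g w)^2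
      ≤ S * ∑ v, ∑ w, J' v w * (ψ' v * ψ' w) * (g v - g w)^2 := by
    rw [Finset.mul_sum]
    apply Finset.sum_le_sum
    intro v _
    rw [Finset.mul_sum]
    apply Finset.sum_le_sum
    intro w _
    by_cases hvw : v = w
    · subst hvw
      simp
    · have h4 := mul_le_mul_of_nonneg_right (hF2 v w hvw) (sq_nonneg (g v - g w))
      linarith [h4]
  -- norm comparison
  have hIff : I * (h ⬝ᵥ h) ≤ f ⬝ᵥ f := by
    simp only [dotProduct, Finset.mul_sum]
    apply Finset.sum_le_sum
    intro v _
    have e1 : h v = ψ' v * g v := congrFun hgh v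
    have e2 : f v = ψ v * g v := congrFun hfdef v
    rw [e1, e2]
    have h4 := mul_le_mul_of_nonneg_right (hIle v) (sq_nonneg (g v))
    linarith [h4]
  have hhpos : 0 < h ⬝ᵥ h := by
    obtain ⟨v₀, hv₀⟩ := hhne
    simp only [dotProduct]
    exact Finset.sum_pos' (fun v _ => mul_self_nonneg (h v))
      ⟨v₀, mem_univ v₀, mul_self_pos.mpr hv₀⟩
  -- chain everything
  have hchain : ((μ ⟨0, hn⟩ - μ k) * I) * (h ⬝ᵥ h) ≤ (S * (μ' ⟨0, hn⟩ - μ' k)) * (h ⬝ᵥ h) := by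
    have c1 : (μ ⟨0, hn⟩ - μ k) * (I * (h ⬝ᵥ h)) ≤ (μ ⟨0, hn⟩ - μ k) * (f ⬝ᵥ f) :=
      mul_le_mul_of_nonneg_left hIff (by linarith)
    have c3 : μ ⟨0, hn⟩ * (f ⬝ᵥ f) - f ⬝ᵥ J.mulVec f
        ≤ S * (μ' ⟨0, hn⟩ * (h ⬝ᵥ h) - h ⬝ᵥ J'.mulVec h) := by
      rw [hQ, hQ']
      linarith [hcompQ]
    have c4 : S * (μ' ⟨0, hn⟩ * (h ⬝ᵥ h) - h ⬝ᵥ J'.mulVec h)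
        ≤ S * ((μ' ⟨0, hn⟩ - μ' k) * (h ⬝ᵥ h)) :=
      mul_le_mul_of_nonneg_left hE2 hSpos.le
    linarith [c1, hE1, c3, c4]
  have hfinal : (μ ⟨0, hn⟩ - μ k) * I ≤ S * (μ' ⟨0, hn⟩ - μ' k) :=
    le_of_mul_le_mul_right hchain hhpos
  rw [div_mul_eq_mul_div, le_div_iff₀ hIpos]
  linarith
end

section
/- Let J and J̃ be two Jacobi matrices on the same finite connected graph G with n vertices and positive edge weights {a_e}, {ã_e}, and suppose their Perron eigenvectors are proportional: ψ = c ψ̃ for some c > 0. Then for every k, (min_e a_e/ã_e)·(λ₁(J̃) - λ_k(J̃)) ≤ λ₁(J) - λ_k(J) ≤ (max_e a_e/ã_e)·(λ₁(J̃) - λ_k(J̃)). -/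
open Finset Matrix

section helpers
variable {V ι : Type*} [Fintype V] [Fintype ι] [DecidableEq ι]

lemma dot_sum_left (c : ι → ℝ) (v : ι → V → ℝ) (z : V → ℝ) :
    (∑ i, c i • v i) ⬝ᵥ z = ∑ i, c i * (v i ⬝ᵥ z) := by
  simp only [dotProduct, Finset.sum_apply, Pi.smul_apply, smul_eq_mul,
    Finset.sum_mul, Finset.mul_sum]
  rw [Finset.sum_comm]
  exact Finset.sum_congr rfl fun i _ => Finset.sum_congr rfl fun x _ => by ring

lemma dot_sum_right (c : ι → ℝ) (v : ι → V → ℝ) (z : V → ℝ) :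
    z ⬝ᵥ (∑ i, c i • v i) = ∑ i, c i * (z ⬝ᵥ v i) := by
  simp only [dotProduct, Finset.sum_apply, Pi.smul_apply, smul_eq_mul,
    Finset.sum_mul, Finset.mul_sum]
  rw [Finset.sum_comm]
  exact Finset.sum_congr rfl fun i _ => Finset.sum_congr rfl fun x _ => by ring

lemma orth_li (v : ι → V → ℝ)
    (hv : ∀ i j, v i ⬝ᵥ v j = if i = j then 1 else 0) : LinearIndependent ℝ v := by
  rw [Fintype.linearIndependent_iff]
  intro cc hcc j
  have h := congrArg (fun z => v j ⬝ᵥ z) hcc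
  simp only [dotProduct_zero] at h
  rw [dot_sum_right] at h
  simpa [hv, mul_ite, Finset.sum_ite_eq] using h

lemma dot_self_pos (x : V → ℝ) (hx : x ≠ 0) : 0 < x ⬝ᵥ x := by
  obtain ⟨v, hv⟩ : ∃ v, x v ≠ 0 := by
    by_contra h; push_neg at h; exact hx (funext h)
  have h1 : ∀ i ∈ (univ : Finset V), 0 ≤ x i * x i := fun i _ => mul_self_nonneg _
  calc (0:ℝ) < x v * x v := mul_self_pos.mpr hv
    _ ≤ ∑ i, x i * x i := Finset.single_le_sum h1 (mem_univ v)
    _ = x ⬝ᵥ x := rfl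

lemma quad_eval (A : Matrix V V ℝ) (v : ι → V → ℝ) (α : ι → ℝ)
    (hv : ∀ i j, v i ⬝ᵥ v j = if i = j then 1 else 0)
    (hA : ∀ i, A.mulVec (v i) = α i • v i) (c : ι → ℝ) :
    ((∑ i, c i • v i) ⬝ᵥ (∑ i, c i • v i) = ∑ i, c i ^ 2) ∧
    ((∑ i, c i • v i) ⬝ᵥ A.mulVec (∑ i, c i • v i) = ∑ i, α i * c i ^ 2) := by
  have hmv : A.mulVec (∑ i, c i • v i) = ∑ i, c i • (α i • v i) := by
    rw [← Matrix.mulVecLin_apply, map_sum]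
    simp [Matrix.mulVecLin_apply, hA]
  constructor
  · rw [dot_sum_left]
    simp_rw [dot_sum_right, hv, mul_ite, mul_one, mul_zero, Finset.sum_ite_eq, mem_univ, if_true]
    exact Finset.sum_congr rfl fun i _ => by ring
  · rw [hmv, dot_sum_left]
    simp_rw [dot_sum_right, dotProduct_smul, hv]
    simp [mul_ite, Finset.sum_ite_eq]
    exact Finset.sum_congr rfl fun i _ => by ring

end helpers



lemma sum_sum_ite_pair {V : Type*} [Fintype V] [DecidableEq V] (p q : V) (F : V → V → ℝ) :
    (∑ v : V, ∑ w : V, if (p = v ∧ q = w) then F v w else 0) = F p q := by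
  have h : ∀ v : V, (∑ w : V, if (p = v ∧ q = w) then F v w else 0)
      = if p = v then F v q else 0 := by
    intro v
    by_cases hv : p = v
    · simp [hv, Finset.sum_ite_eq]
    · simp [hv]
  simp_rw [h, Finset.sum_ite_eq, mem_univ, if_true]

set_option maxHeartbeats 1000000 in
lemma groundstate' {V E : Type*} [Fintype V] [Fintype E] [DecidableEq V]
    (ends : E → V × V) (a : E → ℝ) (b : V → ℝ) (J : Matrix V V ℝ)
    (hJ : ∀ v w, J v w =
      if v = w then
        b v + 2 * ∑ e ∈ univ.filter (fun e => ends e = (v, v)), a e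
      else
        ∑ e ∈ univ.filter (fun e => ends e = (v, w) ∨ ends e = (w, v)), a e)
    (ψ : V → ℝ) (lam : ℝ) (hψ : J.mulVec ψ = lam • ψ)
    (x g : V → ℝ) (hxg : ∀ v, x v = g v * ψ v) :
    lam * (x ⬝ᵥ x) - x ⬝ᵥ J.mulVec x
      = ∑ e, a e * (ψ (ends e).1 * ψ (ends e).2 * (g (ends e).1 - g (ends e).2) ^ 2) := by
  have hJsym : ∀ v w, J v w = J w v := by
    intro v w
    rw [hJ, hJ]
    by_cases h : v = w
    · simp [h]
    · rw [if_neg h, if_neg (Ne.symm h)]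
      exact Finset.sum_congr (Finset.filter_congr fun e _ => by simp [or_comm]) fun _ _ => rfl
  have hlam : ∀ v, lam * ψ v = ∑ w, J v w * ψ w := by
    intro v
    have h := congrFun hψ v
    simp only [Matrix.mulVec, dotProduct, Pi.smul_apply, smul_eq_mul] at h
    exact h.symm
  have key1 : lam * (x ⬝ᵥ x) - x ⬝ᵥ J.mulVec x
      = ∑ v : V, ∑ w : V, J v w * (ψ v * ψ w) * (g v * (g v - g w)) := by
    have e1 : x ⬝ᵥ J.mulVec x = ∑ v : V, ∑ w : V, x v * (J v w * x w) := by
      simp [Matrix.mulVec, dotProduct, Finset.mul_sum]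
    have e2 : lam * (x ⬝ᵥ x) = ∑ v : V, ∑ w : V, (J v w * ψ w) * (g v * x v) := by
      calc lam * (x ⬝ᵥ x) = ∑ v : V, (lam * ψ v) * (g v * x v) := by
            rw [dotProduct, Finset.mul_sum]
            exact Finset.sum_congr rfl fun v _ => by rw [hxg v]; ring
        _ = ∑ v : V, ∑ w : V, (J v w * ψ w) * (g v * x v) := by
            exact Finset.sum_congr rfl fun v _ => by rw [hlam v, Finset.sum_mul]
    rw [e1, e2, ← Finset.sum_sub_distrib]
    refine Finset.sum_congr rfl fun v _ => ?_
    rw [← Finset.sum_sub_distrib]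
    refine Finset.sum_congr rfl fun w _ => ?_
    rw [hxg v, hxg w]; ring
  have swap : (∑ v : V, ∑ w : V, J v w * (ψ v * ψ w) * (g v * (g v - g w)))
      = ∑ v : V, ∑ w : V, J v w * (ψ v * ψ w) * (g w * (g w - g v)) := by
    rw [Finset.sum_comm]
    refine Finset.sum_congr rfl fun v _ => Finset.sum_congr rfl fun w _ => ?_
    rw [hJsym w v]; ring
  have key2 : 2 * (lam * (x ⬝ᵥ x) - x ⬝ᵥ J.mulVec x)
      = ∑ v : V, ∑ w : V, J v w * (ψ v * ψ w * (g v - g w) ^ 2) := by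
    rw [key1, two_mul]
    nth_rewrite 2 [swap]
    rw [← Finset.sum_add_distrib]
    refine Finset.sum_congr rfl fun v _ => ?_
    rw [← Finset.sum_add_distrib]
    exact Finset.sum_congr rfl fun w _ => by ring
  have key3 : (∑ v : V, ∑ w : V, J v w * (ψ v * ψ w * (g v - g w) ^ 2))
      = ∑ e : E, 2 * (a e * (ψ (ends e).1 * ψ (ends e).2
          * (g (ends e).1 - g (ends e).2) ^ 2)) := by
    have step1 : ∀ v w : V, J v w * (ψ v * ψ w * (g v - g w) ^ 2)
        = ∑ e : E, if (ends e = (v, w) ∨ ends e = (w, v)) then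
            a e * (ψ v * ψ w * (g v - g w) ^ 2) else 0 := by
      intro v w
      rw [← Finset.sum_filter]
      by_cases h : v = w
      · subst h; simp
      · rw [hJ v w, if_neg h, Finset.sum_mul]
    have step2 : (∑ v : V, ∑ w : V, J v w * (ψ v * ψ w * (g v - g w) ^ 2))
        = ∑ e : E, ∑ v : V, ∑ w : V, if (ends e = (v, w) ∨ ends e = (w, v)) then
            a e * (ψ v * ψ w * (g v - g w) ^ 2) else 0 := by
      simp_rw [step1]
      calc (∑ v : V, ∑ w : V, ∑ e : E, if (ends e = (v, w) ∨ ends e = (w, v)) then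
            a e * (ψ v * ψ w * (g v - g w) ^ 2) else 0)
          = ∑ v : V, ∑ e : E, ∑ w : V, if (ends e = (v, w) ∨ ends e = (w, v)) then
            a e * (ψ v * ψ w * (g v - g w) ^ 2) else 0 :=
            Finset.sum_congr rfl fun v _ => Finset.sum_comm
        _ = ∑ e : E, ∑ v : V, ∑ w : V, if (ends e = (v, w) ∨ ends e = (w, v)) then
            a e * (ψ v * ψ w * (g v - g w) ^ 2) else 0 := Finset.sum_comm
    rw [step2]
    refine Finset.sum_congr rfl fun e _ => ?_
    set p := (ends e).1 with hp
    set q := (ends e).2 with hq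
    have hpq : ends e = (p, q) := rfl
    have hcond : ∀ v w : V, (ends e = (v, w) ∨ ends e = (w, v))
        ↔ ((p = v ∧ q = w) ∨ (p = w ∧ q = v)) := by
      intro v w
      rw [hpq]
      simp [Prod.ext_iff]
    simp_rw [hcond]
    by_cases h : p = q
    · rw [← h]
      have hc2 : ∀ v w : V, ((p = v ∧ p = w) ∨ (p = w ∧ p = v)) ↔ (p = v ∧ p = w) := by tauto
      simp_rw [hc2, sum_sum_ite_pair]
      simp
    · have split : ∀ v w : V,
          (if ((p = v ∧ q = w) ∨ (p = w ∧ q = v)) then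
            a e * (ψ v * ψ w * (g v - g w) ^ 2) else 0)
          = (if (p = v ∧ q = w) then a e * (ψ v * ψ w * (g v - g w) ^ 2) else 0)
            + (if (q = v ∧ p = w) then a e * (ψ v * ψ w * (g v - g w) ^ 2) else 0) := by
        intro v w
        have hnot : ¬((p = v ∧ q = w) ∧ (p = w ∧ q = v)) :=
          fun hb => h (hb.1.1.trans hb.2.2.symm)
        by_cases h1 : p = v ∧ q = w
        · rw [if_pos (Or.inl h1), if_pos h1,
            if_neg (fun h2 => hnot ⟨h1, h2.2, h2.1⟩), add_zero]
        · by_cases h2 : p = w ∧ q = v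
          · rw [if_pos (Or.inr h2), if_neg h1, if_pos ⟨h2.2, h2.1⟩, zero_add]
          · rw [if_neg (fun hor => hor.elim h1 h2), if_neg h1,
              if_neg (fun h2' => h2 ⟨h2'.2, h2'.1⟩), add_zero]
      simp_rw [split, Finset.sum_add_distrib, sum_sum_ite_pair]
      ring
  have key4 : (∑ e : E, 2 * (a e * (ψ (ends e).1 * ψ (ends e).2
          * (g (ends e).1 - g (ends e).2) ^ 2)))
      = 2 * ∑ e : E, a e * (ψ (ends e).1 * ψ (ends e).2
          * (g (ends e).1 - g (ends e).2) ^ 2) := by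
    rw [Finset.mul_sum]
  linarith [key2, key3, key4]

set_option maxHeartbeats 1000000 in
lemma cmp_eigen {V : Type*} [Fintype V] [DecidableEq V] {n : ℕ} (hcard : Fintype.card V = n)
    (A B : Matrix V V ℝ) (f g : Fin n → ℝ) (hf : Antitone f) (hg : Antitone g)
    (u w : Fin n → V → ℝ)
    (hu : ∀ i j, u i ⬝ᵥ u j = if i = j then 1 else 0)
    (hw : ∀ i j, w i ⬝ᵥ w j = if i = j then 1 else 0)
    (hAu : ∀ i, A.mulVec (u i) = f i • u i)
    (hBw : ∀ i, B.mulVec (w i) = g i • w i)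
    (hAB : ∀ x : V → ℝ, x ⬝ᵥ A.mulVec x ≤ x ⬝ᵥ B.mulVec x)
    (k : Fin n) : f k ≤ g k := by
  have hk1 : (k : ℕ) + 1 ≤ n := k.isLt
  set u1 : Fin ((k : ℕ) + 1) → V → ℝ := fun i => u (Fin.castLE hk1 i) with hu1def
  set w1 : Fin (n - (k : ℕ)) → V → ℝ :=
    fun i => w ⟨(k : ℕ) + (i : ℕ), by omega⟩ with hw1def
  have hu1 : ∀ i j, u1 i ⬝ᵥ u1 j = if i = j then 1 else 0 := by
    intro i j
    rw [hu1def, hu]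
    by_cases h : i = j
    · simp [h]
    · rw [if_neg h, if_neg (fun hc => h (Fin.castLE_injective hk1 hc))]
  have hw1 : ∀ i j, w1 i ⬝ᵥ w1 j = if i = j then 1 else 0 := by
    intro i j
    rw [hw1def, hw]
    by_cases h : i = j
    · simp [h]
    · rw [if_neg h, if_neg]
      intro hc
      apply h
      have := Fin.val_eq_of_eq hc
      simp only at this
      exact Fin.ext (by omega)
  set S := Submodule.span ℝ (Set.range u1) with hSdef
  set T := Submodule.span ℝ (Set.range w1) with hTdef
  have hS : Module.finrank ℝ S = (k : ℕ) + 1 := by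
    rw [hSdef, finrank_span_eq_card (orth_li u1 hu1)]
    simp
  have hT : Module.finrank ℝ T = n - (k : ℕ) := by
    rw [hTdef, finrank_span_eq_card (orth_li w1 hw1)]
    simp
  have hsum : Module.finrank ℝ ↥(S ⊔ T) + Module.finrank ℝ ↥(S ⊓ T)
      = ((k : ℕ) + 1) + (n - (k : ℕ)) := by
    rw [Submodule.finrank_sup_add_finrank_inf_eq, hS, hT]
  have hle : Module.finrank ℝ ↥(S ⊔ T) ≤ n := by
    calc Module.finrank ℝ ↥(S ⊔ T) ≤ Module.finrank ℝ (V → ℝ) := Submodule.finrank_le _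
      _ = n := by rw [Module.finrank_pi]; exact hcard
  have hpos : 0 < Module.finrank ℝ ↥(S ⊓ T) := by
    have : (k : ℕ) < n := k.isLt
    omega
  have : Nontrivial ↥(S ⊓ T) := Module.finrank_pos_iff.mp hpos
  obtain ⟨y, hy⟩ := exists_ne (0 : ↥(S ⊓ T))
  have hx0 : (y : V → ℝ) ≠ 0 := fun h => hy (Subtype.ext h)
  have hxS : (y : V → ℝ) ∈ S := y.2.1
  have hxT : (y : V → ℝ) ∈ T := y.2.2
  obtain ⟨cS, hcS⟩ := (Submodule.mem_span_range_iff_exists_fun ℝ).mp hxS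
  obtain ⟨cT, hcT⟩ := (Submodule.mem_span_range_iff_exists_fun ℝ).mp hxT
  set x : V → ℝ := (y : V → ℝ) with hxdef
  have hd : 0 < x ⬝ᵥ x := dot_self_pos x hx0
  obtain ⟨hnS, hqS⟩ := quad_eval A u1 (fun i => f (Fin.castLE hk1 i)) hu1
    (fun i => hAu _) cS
  obtain ⟨hnT, hqT⟩ := quad_eval B w1 (fun i => g ⟨(k : ℕ) + (i : ℕ), by omega⟩) hw1
    (fun i => hBw _) cT
  rw [hcS] at hnS hqS
  rw [hcT] at hnT hqT
  have hlow : f k * (x ⬝ᵥ x) ≤ x ⬝ᵥ A.mulVec x := by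
    rw [hqS, hnS, Finset.mul_sum]
    refine Finset.sum_le_sum fun i _ => ?_
    have hik : (Fin.castLE hk1 i) ≤ k := by
      have : (i : ℕ) ≤ (k : ℕ) := by omega
      exact this
    exact mul_le_mul_of_nonneg_right (hf hik) (sq_nonneg _)
  have hhigh : x ⬝ᵥ B.mulVec x ≤ g k * (x ⬝ᵥ x) := by
    rw [hqT, hnT, Finset.mul_sum]
    refine Finset.sum_le_sum fun i _ => ?_
    have hik : k ≤ (⟨(k : ℕ) + (i : ℕ), by omega⟩ : Fin n) := by
      have : (k : ℕ) ≤ (k : ℕ) + (i : ℕ) := Nat.le_add_right _ _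
      exact this
    exact mul_le_mul_of_nonneg_right (hg hik) (sq_nonneg _)
  have := le_trans hlow (le_trans (hAB x) hhigh)
  exact le_of_mul_le_mul_right (by linarith) hd

set_option maxHeartbeats 1000000 in
/-- Comparison of eigenvalue gaps for two Jacobi matrices on the same finite
connected (multi)graph, via their ground states. Eigenvalues `μ`, `μ'` are
listed in decreasing order. -/
theorem stmt6 (V E : Type*) [Fintype V] [Fintype E] [DecidableEq V]
    [Nonempty V] [Nonempty E]
    (ends : E → V × V) (a a' : E → ℝ) (ha : ∀ e, 0 < a e) (ha' : ∀ e, 0 < a' e)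
    (b b' : V → ℝ)
    (hconn : (SimpleGraph.fromRel
      (fun v w => ∃ e, ends e = (v, w) ∨ ends e = (w, v))).Connected)
    (J J' : Matrix V V ℝ)
    (hJ : ∀ v w, J v w =
      if v = w then
        b v + 2 * ∑ e ∈ univ.filter (fun e => ends e = (v, v)), a e
      else
        ∑ e ∈ univ.filter (fun e => ends e = (v, w) ∨ ends e = (w, v)), a e)
    (hJ' : ∀ v w, J' v w =
      if v = w then
        b' v + 2 * ∑ e ∈ univ.filter (fun e => ends e = (v, v)), a' e
      else
        ∑ e ∈ univ.filter (fun e => ends e = (v, w) ∨ ends e = (w, v)), a' e)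
    (hHerm : J.IsHermitian) (hHerm' : J'.IsHermitian)
    (hn : 0 < Fintype.card V)
    -- eigenvalues listed in decreasing order
    (μ μ' : Fin (Fintype.card V) → ℝ) (hμdec : Antitone μ) (hμ'dec : Antitone μ')
    (hμ : ∃ σ : V ≃ Fin (Fintype.card V), μ ∘ σ = hHerm.eigenvalues)
    (hμ' : ∃ σ : V ≃ Fin (Fintype.card V), μ' ∘ σ = hHerm'.eigenvalues)
    -- normalized positive Perron eigenvectors
    (ψ ψ' : V → ℝ) (hψpos : ∀ v, 0 < ψ v) (hψ'pos : ∀ v, 0 < ψ' v)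
    (hψnorm : ∑ v, ψ v ^ 2 = 1) (hψ'norm : ∑ v, ψ' v ^ 2 = 1)
    (hψ : J.mulVec ψ = μ ⟨0, hn⟩ • ψ) (hψ' : J'.mulVec ψ' = μ' ⟨0, hn⟩ • ψ')
    -- the Perron eigenvectors are proportional
    (c : ℝ) (hc : 0 < c) (hprop : ψ = c • ψ') :
    ∀ k : Fin (Fintype.card V),
      (univ.inf' univ_nonempty fun e => a e / a' e) * (μ' ⟨0, hn⟩ - μ' k)
        ≤ μ ⟨0, hn⟩ - μ k ∧
      μ ⟨0, hn⟩ - μ k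
        ≤ (univ.sup' univ_nonempty fun e => a e / a' e) * (μ' ⟨0, hn⟩ - μ' k) := by
  intro k
  obtain ⟨σ, hσ⟩ := hμ
  obtain ⟨σ', hσ'⟩ := hμ'
  set m : ℝ := univ.inf' univ_nonempty fun e => a e / a' e with hmdef
  set M : ℝ := univ.sup' univ_nonempty fun e => a e / a' e with hMdef
  have hm0 : 0 < m := by
    rw [hmdef, Finset.lt_inf'_iff]
    exact fun e _ => div_pos (ha e) (ha' e)
  have hM0 : 0 < M := by
    obtain ⟨e⟩ := ‹Nonempty E›
    rw [hMdef]
    exact lt_of_lt_of_le (div_pos (ha e) (ha' e))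
      (Finset.le_sup' (fun e => a e / a' e) (mem_univ e))
  -- eigenvector families
  set U : Fin (Fintype.card V) → V → ℝ := fun i => ⇑(hHerm.eigenvectorBasis (σ.symm i)) with hUdef
  set U' : Fin (Fintype.card V) → V → ℝ := fun i => ⇑(hHerm'.eigenvectorBasis (σ'.symm i)) with hU'def
  have horthU : ∀ i j, U i ⬝ᵥ U j = if i = j then 1 else 0 := by
    have horth := hHerm.eigenvectorBasis.orthonormal
    rw [orthonormal_iff_ite] at horth
    intro i j
    have h := horth (σ.symm i) (σ.symm j)
    simp only [PiLp.inner_apply, RCLike.inner_apply, conj_trivial,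
      EmbeddingLike.apply_eq_iff_eq] at h
    simpa [hUdef, dotProduct, mul_comm] using h
  have horthU' : ∀ i j, U' i ⬝ᵥ U' j = if i = j then 1 else 0 := by
    have horth := hHerm'.eigenvectorBasis.orthonormal
    rw [orthonormal_iff_ite] at horth
    intro i j
    have h := horth (σ'.symm i) (σ'.symm j)
    simp only [PiLp.inner_apply, RCLike.inner_apply, conj_trivial,
      EmbeddingLike.apply_eq_iff_eq] at h
    simpa [hU'def, dotProduct, mul_comm] using h
  have hJU : ∀ i, J.mulVec (U i) = μ i • U i := by
    intro i
    have h := hHerm.mulVec_eigenvectorBasis (σ.symm i)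
    have he : hHerm.eigenvalues (σ.symm i) = μ i := by
      rw [← hσ]; simp
    rw [he] at h
    exact h
  have hJ'U' : ∀ i, J'.mulVec (U' i) = μ' i • U' i := by
    intro i
    have h := hHerm'.mulVec_eigenvectorBasis (σ'.symm i)
    have he : hHerm'.eigenvalues (σ'.symm i) = μ' i := by
      rw [← hσ']; simp
    rw [he] at h
    exact h
  -- quadratic form identities
  have hψv : ∀ v, ψ v = c * ψ' v := by
    intro v; rw [hprop]; rfl
  have hQ : ∀ x : V → ℝ, μ ⟨0, hn⟩ * (x ⬝ᵥ x) - x ⬝ᵥ J.mulVec x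
      = ∑ e, a e * (ψ (ends e).1 * ψ (ends e).2
          * (x (ends e).1 / ψ (ends e).1 - x (ends e).2 / ψ (ends e).2) ^ 2) :=
    fun x => groundstate' ends a b J hJ ψ _ hψ x (fun v => x v / ψ v)
      (fun v => (div_mul_cancel₀ (x v) (hψpos v).ne').symm)
  have hQ' : ∀ x : V → ℝ, μ' ⟨0, hn⟩ * (x ⬝ᵥ x) - x ⬝ᵥ J'.mulVec x
      = ∑ e, a' e * (ψ' (ends e).1 * ψ' (ends e).2
          * (x (ends e).1 / ψ' (ends e).1 - x (ends e).2 / ψ' (ends e).2) ^ 2) :=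
    fun x => groundstate' ends a' b' J' hJ' ψ' _ hψ' x (fun v => x v / ψ' v)
      (fun v => (div_mul_cancel₀ (x v) (hψ'pos v).ne').symm)
  have hterm : ∀ (e : E) (x : V → ℝ),
      a e * (ψ (ends e).1 * ψ (ends e).2
        * (x (ends e).1 / ψ (ends e).1 - x (ends e).2 / ψ (ends e).2) ^ 2)
      = (a e / a' e) * (a' e * (ψ' (ends e).1 * ψ' (ends e).2
        * (x (ends e).1 / ψ' (ends e).1 - x (ends e).2 / ψ' (ends e).2) ^ 2)) := by
    intro e x
    have h1 := (hψ'pos (ends e).1).ne'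
    have h2 := (hψ'pos (ends e).2).ne'
    rw [hψv (ends e).1, hψv (ends e).2]
    field_simp [hc.ne', (ha' e).ne']
  have htermnn : ∀ (e : E) (x : V → ℝ),
      0 ≤ a' e * (ψ' (ends e).1 * ψ' (ends e).2
        * (x (ends e).1 / ψ' (ends e).1 - x (ends e).2 / ψ' (ends e).2) ^ 2) := by
    intro e x
    have := (ha' e).le
    have := (hψ'pos (ends e).1).le
    have := (hψ'pos (ends e).2).le
    positivity
  have hupper : ∀ x : V → ℝ, μ ⟨0, hn⟩ * (x ⬝ᵥ x) - x ⬝ᵥ J.mulVec x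
      ≤ M * (μ' ⟨0, hn⟩ * (x ⬝ᵥ x) - x ⬝ᵥ J'.mulVec x) := by
    intro x
    rw [hQ x, hQ' x, Finset.mul_sum]
    refine Finset.sum_le_sum fun e _ => ?_
    rw [hterm e x]
    have hle : a e / a' e ≤ M := by
      rw [hMdef]; exact Finset.le_sup' (fun e => a e / a' e) (mem_univ e)
    exact mul_le_mul_of_nonneg_right hle (htermnn e x)
  have hlower : ∀ x : V → ℝ, m * (μ' ⟨0, hn⟩ * (x ⬝ᵥ x) - x ⬝ᵥ J'.mulVec x)
      ≤ μ ⟨0, hn⟩ * (x ⬝ᵥ x) - x ⬝ᵥ J.mulVec x := by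
    intro x
    rw [hQ x, hQ' x, Finset.mul_sum]
    refine Finset.sum_le_sum fun e _ => ?_
    rw [hterm e x]
    have hle : m ≤ a e / a' e := by
      rw [hmdef]; exact Finset.inf'_le (fun e => a e / a' e) (mem_univ e)
    exact mul_le_mul_of_nonneg_right hle (htermnn e x)
  have hupperk : M * μ' k + (μ ⟨0, hn⟩ - M * μ' ⟨0, hn⟩) ≤ μ k := by
    refine cmp_eigen rfl (M • J' + (μ ⟨0, hn⟩ - M * μ' ⟨0, hn⟩) • (1 : Matrix V V ℝ)) J
      (fun i => M * μ' i + (μ ⟨0, hn⟩ - M * μ' ⟨0, hn⟩)) μ ?_ hμdec U' U horthU' horthU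
      ?_ hJU ?_ k
    · intro i j hij
      have h1 := hμ'dec hij
      have h2 := mul_le_mul_of_nonneg_left h1 hM0.le
      dsimp only
      linarith
    · intro i
      rw [Matrix.add_mulVec, Matrix.smul_mulVec, Matrix.smul_mulVec,
        Matrix.one_mulVec, hJ'U' i, smul_smul, add_smul]
    · intro x
      have hexp : x ⬝ᵥ (M • J' + (μ ⟨0, hn⟩ - M * μ' ⟨0, hn⟩) • (1 : Matrix V V ℝ)).mulVec x
          = M * (x ⬝ᵥ J'.mulVec x) + (μ ⟨0, hn⟩ - M * μ' ⟨0, hn⟩) * (x ⬝ᵥ x) := by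
        rw [Matrix.add_mulVec, Matrix.smul_mulVec, Matrix.smul_mulVec,
          Matrix.one_mulVec, dotProduct_add, dotProduct_smul,
          dotProduct_smul]
        simp [smul_eq_mul]
      rw [hexp]
      have := hupper x
      linarith
  have hlowerk : μ k ≤ m * μ' k + (μ ⟨0, hn⟩ - m * μ' ⟨0, hn⟩) := by
    refine cmp_eigen rfl J (m • J' + (μ ⟨0, hn⟩ - m * μ' ⟨0, hn⟩) • (1 : Matrix V V ℝ))
      μ (fun i => m * μ' i + (μ ⟨0, hn⟩ - m * μ' ⟨0, hn⟩)) hμdec ?_ U U' horthU horthU'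
      hJU ?_ ?_ k
    · intro i j hij
      have h1 := hμ'dec hij
      have h2 := mul_le_mul_of_nonneg_left h1 hm0.le
      dsimp only
      linarith
    · intro i
      rw [Matrix.add_mulVec, Matrix.smul_mulVec, Matrix.smul_mulVec,
        Matrix.one_mulVec, hJ'U' i, smul_smul, add_smul]
    · intro x
      have hexp : x ⬝ᵥ (m • J' + (μ ⟨0, hn⟩ - m * μ' ⟨0, hn⟩) • (1 : Matrix V V ℝ)).mulVec x
          = m * (x ⬝ᵥ J'.mulVec x) + (μ ⟨0, hn⟩ - m * μ' ⟨0, hn⟩) * (x ⬝ᵥ x) := by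
        rw [Matrix.add_mulVec, Matrix.smul_mulVec, Matrix.smul_mulVec,
          Matrix.one_mulVec, dotProduct_add, dotProduct_smul,
          dotProduct_smul]
        simp [smul_eq_mul]
      rw [hexp]
      have := hlower x
      linarith
  constructor
  · linarith
  · linarith
end
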